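/- For all positive integers n and k, F^d_k(n) = G°_k(n) − G°_k(n − k), and for every odd positive integer k, F°_k(n) = G°_k(n) + G°_k(n − k); here F^d_k counts overlined parts equal to k in (r,s)-colored overpartitions, F°_k counts odd parts equal to k in (r,s)-colored odd-overlined partitions, and G°_k counts odd colored parts repeated at least k times in (r,s)-colored odd-overlined partitions, with G°_k(m) = 0 for m ≤ 0. -/

import Mathlib

/-- An `(r,s)`-colored overpartition of `n`: a pair `(μ, ν)` where `μ` is a multiset of
pairs `(j, c)` with `j` a positive integer and `c ∈ {1, …, r}` (the ordinary parts), `ν` is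
a multiset of pairs `(j, c)` with `j` a positive integer and `c ∈ {1, …, s}` in which every
pair occurs at most once (the overlined parts), and the sum of all first coordinates of `μ`
and `ν`, counted with multiplicity, is `n`. -/
def IsColoredOverpartition (r s n : ℕ) (P : Multiset (ℕ × ℕ) × Multiset (ℕ × ℕ)) : Prop :=
  (∀ p ∈ P.1, 0 < p.1 ∧ 1 ≤ p.2 ∧ p.2 ≤ r) ∧
  (∀ p ∈ P.2, 0 < p.1 ∧ 1 ≤ p.2 ∧ p.2 ≤ s) ∧ P.2.Nodup ∧
  (P.1.map Prod.fst).sum + (P.2.map Prod.fst).sum = n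

/-- An `(r,s)`-colored odd-overlined partition of `n`: a pair `(μ, ω)` where `μ` is a
multiset of pairs `(j, c)` with `j` a positive integer and `c ∈ {1, …, r}`, `ω` is a
multiset of pairs `(j, c)` with `j` an odd positive integer and `c ∈ {1, …, s}`, and the
sum of all first coordinates of `μ` and `ω`, counted with multiplicity, is `n`. -/
def IsColoredOddOverlined (r s n : ℕ) (P : Multiset (ℕ × ℕ) × Multiset (ℕ × ℕ)) : Prop :=
  (∀ p ∈ P.1, 0 < p.1 ∧ 1 ≤ p.2 ∧ p.2 ≤ r) ∧
  (∀ p ∈ P.2, Odd p.1 ∧ 1 ≤ p.2 ∧ p.2 ≤ s) ∧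
  (P.1.map Prod.fst).sum + (P.2.map Prod.fst).sum = n

/-- `F^d k n`: the total number of overlined parts with first coordinate `k` over all
`(r,s)`-colored overpartitions of `n`. -/
noncomputable def overFDist (r s k n : ℕ) : ℕ :=
  ∑ᶠ P ∈ {P | IsColoredOverpartition r s n P},
    (Multiset.filter (fun p => p.1 = k) P.2).card

/-- `F° k n`: the total number of parts of `ω` with first coordinate `k`, counted with
multiplicity, over all `(r,s)`-colored odd-overlined partitions of `n`. -/
noncomputable def overFOdd (r s k n : ℕ) : ℕ :=
  ∑ᶠ P ∈ {P | IsColoredOddOverlined r s n P},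
    (Multiset.filter (fun p => p.1 = k) P.2).card

/-- `G° k n`: the total number of distinct colored parts of `ω` occurring in `ω` with
multiplicity at least `k`, summed over all `(r,s)`-colored odd-overlined partitions of
`n`. -/
noncomputable def overGOdd (r s k n : ℕ) : ℕ :=
  ∑ᶠ P ∈ {P | IsColoredOddOverlined r s n P},
    (P.2.toFinset.filter fun p => k ≤ P.2.count p).card


namespace OverAux

open Multiset Finset



lemma card_le_sum_fst {m : Multiset (ℕ × ℕ)} (h : ∀ p ∈ m, 0 < p.1) :
    Multiset.card m ≤ (m.map Prod.fst).sum := by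
  induction m using Multiset.induction_on with
  | empty => simp
  | cons a t ih =>
    simp only [Multiset.map_cons, Multiset.sum_cons, Multiset.card_cons]
    have h1 := h a (Multiset.mem_cons_self a t)
    have h2 := ih (fun p hp => h p (Multiset.mem_cons_of_mem hp))
    omega

lemma finite_le (u : Multiset (ℕ × ℕ)) : {m : Multiset (ℕ × ℕ) | m ≤ u}.Finite := by
  apply Set.Finite.subset u.powerset.toFinset.finite_toSet
  intro m hm
  simp only [Finset.mem_coe, Multiset.mem_toFinset, Multiset.mem_powerset]
  exact hm

lemma le_bound {n b : ℕ} {m : Multiset (ℕ × ℕ)} (hmem : ∀ p ∈ m, 0 < p.1 ∧ p.2 ≤ b)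
    (hsum : (m.map Prod.fst).sum ≤ n) :
    m ≤ n • ((Finset.range (n + 1) ×ˢ Finset.range (b + 1)).val) := by
  rw [Multiset.le_iff_count]
  intro p
  by_cases hp : p ∈ m
  · have h1 := hmem p hp
    have hfst : p.1 ≤ n :=
      le_trans (Multiset.le_sum_of_mem (Multiset.mem_map_of_mem Prod.fst hp)) hsum
    have hcount : m.count p ≤ n :=
      le_trans (Multiset.count_le_card p m)
        (le_trans (card_le_sum_fst (fun q hq => (hmem q hq).1)) hsum)
    rw [Multiset.count_nsmul]
    have hmemF : p ∈ Finset.range (n + 1) ×ˢ Finset.range (b + 1) := by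
      simp only [Finset.mem_product, Finset.mem_range]
      omega
    have h2 : (Finset.range (n + 1) ×ˢ Finset.range (b + 1)).val.count p = 1 :=
      Multiset.count_eq_one_of_mem (Finset.range (n + 1) ×ˢ Finset.range (b + 1)).nodup hmemF
    rw [h2]
    omega
  · rw [Multiset.count_eq_zero_of_notMem hp]
    exact Nat.zero_le _

lemma finite_SO (r s n : ℕ) : {P | IsColoredOddOverlined r s n P}.Finite := by
  classical
  set u := n • ((Finset.range (n + 1) ×ˢ Finset.range (max r s + 1)).val) with hu
  apply Set.Finite.subset (Set.Finite.prod (finite_le u) (finite_le u))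
  rintro ⟨m1, m2⟩ ⟨h1, h2, h3⟩
  constructor
  · exact le_bound (fun p hp => ⟨(h1 p hp).1, le_trans (h1 p hp).2.2 (le_max_left r s)⟩)
      (by omega)
  · exact le_bound (fun p hp => ⟨(h2 p hp).1.pos, le_trans (h2 p hp).2.2 (le_max_right r s)⟩)
      (by omega)

lemma finite_SD (r s n : ℕ) : {P | IsColoredOverpartition r s n P}.Finite := by
  classical
  set u := n • ((Finset.range (n + 1) ×ˢ Finset.range (max r s + 1)).val) with hu
  apply Set.Finite.subset (Set.Finite.prod (finite_le u) (finite_le u))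
  rintro ⟨m1, m2⟩ ⟨h1, h2, hnd, h3⟩
  constructor
  · exact le_bound (fun p hp => ⟨(h1 p hp).1, le_trans (h1 p hp).2.2 (le_max_left r s)⟩)
      (by omega)
  · exact le_bound (fun p hp => ⟨(h2 p hp).1, le_trans (h2 p hp).2.2 (le_max_right r s)⟩)
      (by omega)

noncomputable def FO (r s n : ℕ) : Finset (Multiset (ℕ × ℕ) × Multiset (ℕ × ℕ)) :=
  (finite_SO r s n).toFinset

noncomputable def FD (r s n : ℕ) : Finset (Multiset (ℕ × ℕ) × Multiset (ℕ × ℕ)) :=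
  (finite_SD r s n).toFinset

lemma mem_FO {r s n : ℕ} {P} : P ∈ FO r s n ↔ IsColoredOddOverlined r s n P :=
  (finite_SO r s n).mem_toFinset

lemma mem_FD {r s n : ℕ} {P} : P ∈ FD r s n ↔ IsColoredOverpartition r s n P :=
  (finite_SD r s n).mem_toFinset

noncomputable def NO (r s n : ℕ) : ℕ := (FO r s n).card

noncomputable def ND (r s n : ℕ) : ℕ := (FD r s n).card

lemma sum_le_of_le {u v : Multiset ℕ} (h : u ≤ v) : u.sum ≤ v.sum := by
  obtain ⟨w, rfl⟩ := Multiset.le_iff_exists_add.mp h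
  simp

lemma remove_odd (r s : ℕ) (m j c t : ℕ) (hj : Odd j) (hc1 : 1 ≤ c) (hc2 : c ≤ s)
    (ht : 1 ≤ t) :
    ((FO r s m).filter (fun P => t ≤ P.2.count (j, c))).card
      = if t * j ≤ m then NO r s (m - t * j) else 0 := by
  classical
  have hrepl_map : ((Multiset.replicate t ((j, c) : ℕ × ℕ)).map Prod.fst).sum = t * j := by
    rw [Multiset.map_replicate, Multiset.sum_replicate, smul_eq_mul]
  split_ifs with hle
  · apply Finset.card_nbij' (i := fun P => (P.1, P.2 - Multiset.replicate t (j, c)))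
      (j := fun Q => (Q.1, Q.2 + Multiset.replicate t (j, c)))
    · intro P hP
      rw [Finset.mem_coe, Finset.mem_filter, mem_FO] at hP
      obtain ⟨⟨hP1, hP2, hP3⟩, hcount⟩ := hP
      have hrepl : Multiset.replicate t ((j, c) : ℕ × ℕ) ≤ P.2 :=
        Multiset.le_count_iff_replicate_le.mp hcount
      have hdec : P.2 - Multiset.replicate t (j, c) + Multiset.replicate t (j, c) = P.2 :=
        tsub_add_cancel_of_le hrepl
      rw [Finset.mem_coe, mem_FO]
      refine ⟨hP1, ?_, ?_⟩
      · intro p hp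
        exact hP2 p (Multiset.mem_of_le (Multiset.sub_le_self _ _) hp)
      · have hsum2 : ((P.2 - Multiset.replicate t (j, c)).map Prod.fst).sum + t * j
            = (P.2.map Prod.fst).sum := by
          conv_rhs => rw [← hdec]
          rw [Multiset.map_add, Multiset.sum_add, hrepl_map]
        simp only []
        omega
    · intro Q hQ
      rw [Finset.mem_coe, mem_FO] at hQ
      obtain ⟨hQ1, hQ2, hQ3⟩ := hQ
      rw [Finset.mem_coe, Finset.mem_filter, mem_FO]
      refine ⟨⟨hQ1, ?_, ?_⟩, ?_⟩
      · intro p hp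
        rw [Multiset.mem_add] at hp
        rcases hp with hp | hp
        · exact hQ2 p hp
        · rw [Multiset.eq_of_mem_replicate hp]
          exact ⟨hj, hc1, hc2⟩
      · simp only [Multiset.map_add, Multiset.sum_add, hrepl_map]
        omega
      · have hce : Multiset.count ((j, c) : ℕ × ℕ) (Q.2 + Multiset.replicate t (j, c))
            = Multiset.count ((j, c) : ℕ × ℕ) Q.2 + t := by simp
        rw [hce]
        omega
    · intro P hP
      rw [Finset.mem_coe, Finset.mem_filter] at hP
      have hrepl : Multiset.replicate t ((j, c) : ℕ × ℕ) ≤ P.2 :=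
        Multiset.le_count_iff_replicate_le.mp hP.2
      exact Prod.ext rfl (tsub_add_cancel_of_le hrepl)
    · intro Q _
      exact Prod.ext rfl (add_tsub_cancel_right _ _)
  · rw [Finset.card_eq_zero, Finset.filter_eq_empty_iff]
    intro P hP
    rw [mem_FO] at hP
    obtain ⟨hP1, hP2, hP3⟩ := hP
    intro hcount
    have hrepl : Multiset.replicate t ((j, c) : ℕ × ℕ) ≤ P.2 :=
      Multiset.le_count_iff_replicate_le.mp hcount
    have : t * j ≤ (P.2.map Prod.fst).sum := by
      rw [← hrepl_map]
      exact sum_le_of_le (Multiset.map_le_map hrepl)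
    omega

lemma remove_dist (r s k c m : ℕ) (hc1 : 1 ≤ c) (hc2 : c ≤ s) (hk : 0 < k) (hkm : k ≤ m) :
    ((FD r s m).filter (fun P => (k, c) ∈ P.2)).card
      = ((FD r s (m - k)).filter (fun P => (k, c) ∉ P.2)).card := by
  classical
  apply Finset.card_nbij' (i := fun P => (P.1, P.2.erase (k, c)))
    (j := fun Q => (Q.1, (k, c) ::ₘ Q.2))
  · intro P hP
    rw [Finset.mem_coe, Finset.mem_filter, mem_FD] at hP
    obtain ⟨⟨hP1, hP2, hnd, hP3⟩, hmem⟩ := hP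
    have hcons : (k, c) ::ₘ P.2.erase (k, c) = P.2 := Multiset.cons_erase hmem
    rw [Finset.mem_coe, Finset.mem_filter, mem_FD]
    refine ⟨⟨hP1, ?_, hnd.erase _, ?_⟩, hnd.notMem_erase⟩
    · intro p hp
      exact hP2 p (Multiset.mem_of_mem_erase hp)
    · have : (P.2.map Prod.fst).sum = k + ((P.2.erase (k, c)).map Prod.fst).sum := by
        conv_lhs => rw [← hcons]
        simp
      simp only []
      omega
  · intro Q hQ
    rw [Finset.mem_coe, Finset.mem_filter, mem_FD] at hQ
    obtain ⟨⟨hQ1, hQ2, hnd, hQ3⟩, hmem⟩ := hQ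
    rw [Finset.mem_coe, Finset.mem_filter, mem_FD]
    refine ⟨⟨hQ1, ?_, ?_, ?_⟩, Multiset.mem_cons_self _ _⟩
    · intro p hp
      rw [Multiset.mem_cons] at hp
      rcases hp with rfl | hp
      · exact ⟨hk, hc1, hc2⟩
      · exact hQ2 p hp
    · exact Multiset.nodup_cons.mpr ⟨hmem, hnd⟩
    · simp only [Multiset.map_cons, Multiset.sum_cons]
      omega
  · intro P hP
    rw [Finset.mem_coe, Finset.mem_filter] at hP
    exact Prod.ext rfl (Multiset.cons_erase hP.2)
  · intro Q _
    exact Prod.ext rfl (Multiset.erase_cons_head _ _)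

lemma remove_dist_zero (r s k c m : ℕ) (hk : 0 < k) (hkm : m < k) :
    ((FD r s m).filter (fun P => (k, c) ∈ P.2)).card = 0 := by
  classical
  rw [Finset.card_eq_zero, Finset.filter_eq_empty_iff]
  intro P hP
  rw [mem_FD] at hP
  obtain ⟨hP1, hP2, hnd, hP3⟩ := hP
  intro hmem
  have : k ≤ (P.2.map Prod.fst).sum :=
    Multiset.le_sum_of_mem (Multiset.mem_map_of_mem Prod.fst hmem)
  omega

/-! ### Glaisher's bijection -/

lemma odd_not_two_dvd {x : ℕ} (h : Odd x) : ¬ 2 ∣ x := by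
  rw [Nat.odd_iff] at h
  omega

lemma not_two_dvd_odd {x : ℕ} (h : ¬ 2 ∣ x) : Odd x := by
  rw [Nat.odd_iff]
  omega

lemma ordCompl_odd {x : ℕ} (hx : x ≠ 0) : Odd (ordCompl[2] x) :=
  not_two_dvd_odd (Nat.not_dvd_ordCompl Nat.prime_two hx)

lemma v2_mul_pow {a b : ℕ} (hb : ¬ 2 ∣ b) : (2 ^ a * b).factorization 2 = a := by
  have hb0 : b ≠ 0 := by rintro rfl; exact hb (dvd_zero 2)
  rw [Nat.factorization_mul (pow_ne_zero a two_ne_zero) hb0]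
  simp [Nat.Prime.factorization_pow, Nat.factorization_eq_zero_of_not_dvd hb,
    Nat.Prime.factorization_self Nat.prime_two]

lemma ordProj_mul_pow {a b : ℕ} (hb : ¬ 2 ∣ b) : ordProj[2] (2 ^ a * b) = 2 ^ a := by
  rw [v2_mul_pow hb]

lemma ordCompl_mul_pow {a b : ℕ} (hb : ¬ 2 ∣ b) : ordCompl[2] (2 ^ a * b) = b := by
  rw [ordProj_mul_pow hb]
  exact Nat.mul_div_cancel_left b (Nat.pow_pos (n := a) (by norm_num))

def glaisher (ν : Multiset (ℕ × ℕ)) : Multiset (ℕ × ℕ) :=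
  ν.bind fun p => Multiset.replicate (ordProj[2] p.1) (ordCompl[2] p.1, p.2)

lemma glaisher_sum (ν : Multiset (ℕ × ℕ)) :
    ((glaisher ν).map Prod.fst).sum = (ν.map Prod.fst).sum := by
  induction ν using Multiset.induction_on with
  | empty => simp [glaisher]
  | cons p t ih =>
    rw [glaisher, Multiset.cons_bind, Multiset.map_add, Multiset.sum_add, ← glaisher, ih,
      Multiset.map_replicate, Multiset.sum_replicate, smul_eq_mul,
      Nat.ordProj_mul_ordCompl_eq_self, Multiset.map_cons, Multiset.sum_cons]

lemma glaisher_parts {s : ℕ} {ν : Multiset (ℕ × ℕ)}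
    (hν : ∀ p ∈ ν, 0 < p.1 ∧ 1 ≤ p.2 ∧ p.2 ≤ s) :
    ∀ q ∈ glaisher ν, Odd q.1 ∧ 1 ≤ q.2 ∧ q.2 ≤ s := by
  intro q hq
  rw [glaisher, Multiset.mem_bind] at hq
  obtain ⟨p, hp, hq⟩ := hq
  obtain ⟨h1, h2, h3⟩ := hν p hp
  rw [Multiset.eq_of_mem_replicate hq]
  exact ⟨ordCompl_odd h1.ne', h2, h3⟩

lemma mem_iff_bitIndices {ν : Multiset (ℕ × ℕ)} (hnd : ν.Nodup) {b c a : ℕ} (hb : ¬ 2 ∣ b) :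
    (2 ^ a * b, c) ∈ ν ↔ a ∈ ((glaisher ν).count (b, c)).bitIndices := by
  classical
  -- the finset of elements of ν contributing to the count
  set F : Finset (ℕ × ℕ) :=
    ν.toFinset.filter (fun p => ordCompl[2] p.1 = b ∧ p.2 = c) with hF
  have hcount : (glaisher ν).count (b, c) = ∑ p ∈ F, ordProj[2] p.1 := by
    rw [glaisher, Multiset.count_bind]
    have hν : ν = ν.toFinset.val := by
      rw [Multiset.toFinset_val, (Multiset.dedup_eq_self).mpr hnd]
    conv_lhs => rw [hν]
    rw [hF, Finset.sum_filter]
    rw [Finset.sum]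
    congr 1
    apply Multiset.map_congr rfl
    intro p hp
    rw [Multiset.count_replicate]
    by_cases h : ((ordCompl[2] p.1 : ℕ), p.2) = ((b : ℕ), c)
    · rw [if_pos h, if_pos]
      rw [Prod.mk.injEq] at h
      exact ⟨h.1, h.2⟩
    · rw [if_neg h, if_neg]
      intro hcon
      exact h (by rw [Prod.mk.injEq]; exact ⟨hcon.1, hcon.2⟩)
  set A : Finset ℕ := F.image (fun p => p.1.factorization 2) with hA
  have hinj : ∀ p ∈ F, ∀ q ∈ F, p.1.factorization 2 = q.1.factorization 2 → p = q := by
    intro p hp q hq h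
    rw [hF, Finset.mem_filter] at hp hq
    have hp1 : p.1 = 2 ^ (p.1.factorization 2) * b := by
      rw [← hp.2.1]; exact (Nat.ordProj_mul_ordCompl_eq_self p.1 2).symm
    have hq1 : q.1 = 2 ^ (q.1.factorization 2) * b := by
      rw [← hq.2.1]; exact (Nat.ordProj_mul_ordCompl_eq_self q.1 2).symm
    have : p.1 = q.1 := by rw [hp1, hq1, h]
    exact Prod.ext this (by rw [hp.2.2, hq.2.2])
  have hsumA : ∑ p ∈ F, ordProj[2] p.1 = ∑ x ∈ A, 2 ^ x := by
    rw [hA, Finset.sum_image hinj]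
  have hbit : ((glaisher ν).count (b, c)).bitIndices = A.sort (· ≤ ·) := by
    rw [hcount, hsumA]
    have : ∑ x ∈ A, 2 ^ x = ((A.sort (· ≤ ·)).map (2 ^ ·)).sum := by
      rw [Finset.sum]
      rw [← Finset.sort_eq A (· ≤ ·)]
      rfl
    rw [this, Nat.bitIndices_twoPowsum (Finset.sortedLT_sort A)]
  rw [hbit, Finset.mem_sort]
  constructor
  · intro hmem
    rw [hA, Finset.mem_image]
    refine ⟨(2 ^ a * b, c), ?_, ?_⟩
    · rw [hF, Finset.mem_filter, Multiset.mem_toFinset]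
      exact ⟨hmem, ordCompl_mul_pow hb, rfl⟩
    · exact v2_mul_pow hb
  · intro hmem
    rw [hA, Finset.mem_image] at hmem
    obtain ⟨p, hp, ha⟩ := hmem
    rw [hF, Finset.mem_filter, Multiset.mem_toFinset] at hp
    have hp1 : p.1 = 2 ^ a * b := by
      rw [← ha, ← hp.2.1]; exact (Nat.ordProj_mul_ordCompl_eq_self p.1 2).symm
    have : p = (2 ^ a * b, c) := Prod.ext hp1 hp.2.2
    rw [← this]
    exact hp.1

lemma glaisher_inj {ν ν' : Multiset (ℕ × ℕ)} (hnd : ν.Nodup) (hnd' : ν'.Nodup)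
    (hpos : ∀ p ∈ ν, 0 < p.1) (hpos' : ∀ p ∈ ν', 0 < p.1)
    (h : glaisher ν = glaisher ν') : ν = ν' := by
  rw [Multiset.Nodup.ext hnd hnd']
  intro q
  by_cases hq1 : q.1 = 0
  · constructor
    · intro hq; exact absurd hq1 (hpos q hq).ne'
    · intro hq; exact absurd hq1 (hpos' q hq).ne'
  · have hb : ¬ 2 ∣ ordCompl[2] q.1 := Nat.not_dvd_ordCompl Nat.prime_two hq1
    have hdecomp : q = (2 ^ (q.1.factorization 2) * ordCompl[2] q.1, q.2) :=
      Prod.ext (Nat.ordProj_mul_ordCompl_eq_self q.1 2).symm rfl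
    rw [hdecomp, mem_iff_bitIndices hnd hb, mem_iff_bitIndices hnd' hb, h]

lemma bind_replicate (m : Multiset ℕ) (e : ℕ → ℕ) (x : ℕ × ℕ) :
    (m.bind fun a => Multiset.replicate (e a) x) = Multiset.replicate ((m.map e).sum) x := by
  induction m using Multiset.induction_on with
  | empty => simp
  | cons a t ih =>
    rw [Multiset.cons_bind, ih, Multiset.map_cons, Multiset.sum_cons,
      Multiset.replicate_add]

def unglaisher (ω : Multiset (ℕ × ℕ)) : Multiset (ℕ × ℕ) :=
  ω.toFinset.val.bind fun q => ↑(((ω.count q).bitIndices).map fun a => (2 ^ a * q.1, q.2))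

lemma glaisher_unglaisher {ω : Multiset (ℕ × ℕ)} (hω : ∀ q ∈ ω, Odd q.1) :
    glaisher (unglaisher ω) = ω := by
  classical
  rw [unglaisher, glaisher, Multiset.bind_assoc]
  have hcong : ∀ q ∈ ω.toFinset.val,
      ((↑(((ω.count q).bitIndices).map fun a => ((2 ^ a * q.1 : ℕ), q.2)) : Multiset (ℕ × ℕ)).bind
        fun p => Multiset.replicate (ordProj[2] p.1) (ordCompl[2] p.1, p.2))
      = Multiset.replicate (ω.count q) q := by
    intro q hq
    have hqω : q ∈ ω := by rwa [← Multiset.mem_toFinset]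
    have hodd : ¬ 2 ∣ q.1 := odd_not_two_dvd (hω q hqω)
    rw [← Multiset.map_coe, Multiset.bind_map]
    have : ∀ a, (Multiset.replicate (ordProj[2] ((2 ^ a * q.1 : ℕ), q.2).1)
          ((ordCompl[2] ((2 ^ a * q.1 : ℕ), q.2).1 : ℕ), ((2 ^ a * q.1 : ℕ), q.2).2))
        = Multiset.replicate (2 ^ a) q := by
      intro a
      rw [ordProj_mul_pow hodd]
      rw [Nat.mul_div_cancel_left q.1 (Nat.pow_pos (n := a) (by norm_num))]
    rw [Multiset.bind_congr (fun a _ => this a)]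
    rw [bind_replicate]
    congr 1
    rw [Multiset.map_coe, Multiset.sum_coe, Nat.twoPowSum_bitIndices]
  rw [Multiset.bind_congr hcong]
  have hbs : (ω.toFinset.val.bind fun q => Multiset.replicate (ω.count q) q)
      = ∑ q ∈ ω.toFinset, (ω.count q) • ({q} : Multiset (ℕ × ℕ)) := by
    simp only [← Multiset.nsmul_singleton]
    rfl
  rw [hbs, Multiset.toFinset_sum_count_nsmul_eq]

lemma unglaisher_parts {s : ℕ} {ω : Multiset (ℕ × ℕ)}
    (hω : ∀ q ∈ ω, Odd q.1 ∧ 1 ≤ q.2 ∧ q.2 ≤ s) :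
    ∀ p ∈ unglaisher ω, 0 < p.1 ∧ 1 ≤ p.2 ∧ p.2 ≤ s := by
  intro p hp
  rw [unglaisher, Multiset.mem_bind] at hp
  obtain ⟨q, hq, hp⟩ := hp
  rw [Multiset.mem_coe, List.mem_map] at hp
  obtain ⟨a, _, rfl⟩ := hp
  have hqω : q ∈ ω := by rwa [← Multiset.mem_toFinset]
  obtain ⟨h1, h2, h3⟩ := hω q hqω
  exact ⟨Nat.mul_pos (Nat.pow_pos (n := a) (by norm_num)) h1.pos, h2, h3⟩

lemma unglaisher_nodup {ω : Multiset (ℕ × ℕ)} (hω : ∀ q ∈ ω, Odd q.1) :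
    (unglaisher ω).Nodup := by
  classical
  rw [unglaisher, Multiset.nodup_bind]
  constructor
  · intro q hq
    have hqω : q ∈ ω := by rwa [← Multiset.mem_toFinset]
    have hq1 : 0 < q.1 := (hω q hqω).pos
    rw [Multiset.coe_nodup]
    apply List.Nodup.map
    · intro a a' haa
      rw [Prod.mk.injEq] at haa
      have := Nat.eq_of_mul_eq_mul_right hq1 haa.1
      exact Nat.pow_right_injective (le_refl 2) this
    · exact (Nat.bitIndices_sorted).nodup
  · apply Multiset.Nodup.pairwise _ ω.toFinset.nodup
    intro q hq q' hq' hne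
    have hqω : q ∈ ω := by rwa [← Multiset.mem_toFinset]
    have hq'ω : q' ∈ ω := by rwa [← Multiset.mem_toFinset]
    have hodd : ¬ 2 ∣ q.1 := odd_not_two_dvd (hω q hqω)
    have hodd' : ¬ 2 ∣ q'.1 := odd_not_two_dvd (hω q' hq'ω)
    rw [Function.onFun, Multiset.disjoint_left]
    intro p hp hp'
    rw [Multiset.mem_coe, List.mem_map] at hp hp'
    obtain ⟨a, _, rfl⟩ := hp
    obtain ⟨a', _, heq⟩ := hp'
    rw [Prod.mk.injEq] at heq
    have h2 : q'.2 = q.2 := heq.2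
    have h1 : 2 ^ a' * q'.1 = 2 ^ a * q.1 := heq.1
    have hv : a' = a := by
      have := congrArg (fun x => x.factorization 2) h1
      simpa [v2_mul_pow hodd, v2_mul_pow hodd'] using this
    have : q'.1 = q.1 := by
      rw [hv] at h1
      exact Nat.eq_of_mul_eq_mul_left (Nat.pow_pos (n := a) (by norm_num)) h1
    exact hne (Prod.ext this h2).symm

lemma unglaisher_sum (ω : Multiset (ℕ × ℕ)) :
    ((unglaisher ω).map Prod.fst).sum = (ω.map Prod.fst).sum := by
  classical
  rw [unglaisher, Multiset.map_bind]
  have h1 : ∀ q ∈ ω.toFinset.val,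
      ((↑((((ω.count q).bitIndices).map fun a => ((2 ^ a * q.1 : ℕ), q.2))) :
          Multiset (ℕ × ℕ)).map Prod.fst).sum = ω.count q * q.1 := by
    intro q _
    rw [Multiset.map_coe, Multiset.sum_coe, List.map_map]
    have : (Prod.fst ∘ fun a => ((2 ^ a * q.1 : ℕ), q.2)) = fun a => 2 ^ a * q.1 := rfl
    rw [this, List.sum_map_mul_right, Nat.twoPowSum_bitIndices]
  have hbind : ∀ (f g : ℕ × ℕ → Multiset ℕ), (∀ q ∈ ω.toFinset.val, f q = g q) →
      (ω.toFinset.val.bind f).sum = (ω.toFinset.val.bind g).sum := by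
    intro f g h
    rw [Multiset.bind_congr h]
  -- sum over the bind
  have h2 : ((ω.toFinset.val.bind fun q =>
      ((↑((((ω.count q).bitIndices).map fun a => ((2 ^ a * q.1 : ℕ), q.2))) :
          Multiset (ℕ × ℕ)).map Prod.fst))).sum
      = ∑ q ∈ ω.toFinset, ω.count q * q.1 := by
    rw [Multiset.sum_bind]
    rw [Finset.sum]
    apply congrArg
    apply Multiset.map_congr rfl
    exact h1
  rw [h2]
  rw [Finset.sum_multiset_map_count ω Prod.fst]
  apply Finset.sum_congr rfl
  intro q _
  rw [smul_eq_mul]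

lemma euler (r s m : ℕ) : ND r s m = NO r s m := by
  classical
  apply Finset.card_bij (i := fun P _ => (P.1, glaisher P.2))
  · intro P hP
    rw [mem_FD] at hP
    obtain ⟨h1, h2, hnd, h3⟩ := hP
    rw [mem_FO]
    exact ⟨h1, glaisher_parts h2, by rw [glaisher_sum]; exact h3⟩
  · intro P hP P' hP' heq
    rw [mem_FD] at hP hP'
    rw [Prod.mk.injEq] at heq
    exact Prod.ext heq.1
      (glaisher_inj hP.2.2.1 hP'.2.2.1 (fun p hp => (hP.2.1 p hp).1)
        (fun p hp => (hP'.2.1 p hp).1) heq.2)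
  · intro Q hQ
    rw [mem_FO] at hQ
    obtain ⟨h1, h2, h3⟩ := hQ
    have hodd : ∀ q ∈ Q.2, Odd q.1 := fun q hq => (h2 q hq).1
    refine ⟨(Q.1, unglaisher Q.2), ?_, ?_⟩
    · rw [mem_FD]
      exact ⟨h1, unglaisher_parts h2, unglaisher_nodup hodd,
        by rw [unglaisher_sum]; exact h3⟩
    · exact Prod.ext rfl (glaisher_unglaisher hodd)

/-! ### Counting reductions -/

lemma card_filter_eq_sum_count {m : Multiset (ℕ × ℕ)} {k s : ℕ}
    (hm : ∀ p ∈ m, 1 ≤ p.2 ∧ p.2 ≤ s) :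
    (m.filter (fun p => p.1 = k)).card = ∑ c ∈ Finset.Icc 1 s, m.count (k, c) := by
  classical
  have hsub : ∀ q ∈ m.filter (fun p => p.1 = k),
      q ∈ (({k} : Finset ℕ) ×ˢ Finset.Icc 1 s) := by
    intro q hq
    rw [Multiset.mem_filter] at hq
    have h2 := hm q hq.1
    rw [Finset.mem_product, Finset.mem_singleton, Finset.mem_Icc]
    exact ⟨hq.2, h2.1, h2.2⟩
  rw [← Multiset.sum_count_eq_card hsub, Finset.sum_product, Finset.sum_singleton]
  apply Finset.sum_congr rfl
  intro c _
  rw [Multiset.count_filter]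
  simp

lemma sum_ite_le {n t : ℕ} (h : t ≤ n) :
    ∑ i ∈ Finset.Icc 1 n, (if i ≤ t then 1 else 0) = t := by
  classical
  rw [← Finset.card_filter]
  have : (Finset.Icc 1 n).filter (fun i => i ≤ t) = Finset.Icc 1 t := by
    ext i
    simp only [Finset.mem_filter, Finset.mem_Icc]
    omega
  rw [this, Nat.card_Icc]
  omega

lemma countO_le {r s n : ℕ} {P : Multiset (ℕ × ℕ) × Multiset (ℕ × ℕ)}
    (hP : IsColoredOddOverlined r s n P) (q : ℕ × ℕ) : P.2.count q ≤ n := by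
  obtain ⟨h1, h2, h3⟩ := hP
  exact le_trans (Multiset.count_le_card q P.2)
    (le_trans (card_le_sum_fst (fun p hp => (h2 p hp).1.pos)) (by omega))

lemma fstO_le {r s n : ℕ} {P : Multiset (ℕ × ℕ) × Multiset (ℕ × ℕ)}
    (hP : IsColoredOddOverlined r s n P) {q : ℕ × ℕ} (hq : q ∈ P.2) : q.1 ≤ n := by
  obtain ⟨h1, h2, h3⟩ := hP
  exact le_trans (Multiset.le_sum_of_mem (Multiset.mem_map_of_mem Prod.fst hq)) (by omega)

noncomputable def gg (r s k m : ℕ) : ℕ :=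
  ∑ t ∈ Finset.range ((m / k + 1) / 2), NO r s (m - (2 * t + 1) * k)

noncomputable def hhh (r s k m : ℕ) : ℕ :=
  ∑ t ∈ Finset.range (m / k), NO r s (m - (t + 1) * k)

lemma odd_sum_eq_gg (r s k n : ℕ) (hk : 0 < k) :
    ∑ j ∈ Finset.Icc 1 n, (if Odd j then (if k * j ≤ n then NO r s (n - k * j) else 0) else 0)
      = gg r s k n := by
  classical
  have hdiv : ∀ x : ℕ, k * x ≤ n ↔ x ≤ n / k := by
    intro x
    rw [mul_comm, ← Nat.le_div_iff_mul_le hk]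
  have hMn : n / k ≤ n := Nat.div_le_self n k
  have hcollapse : ∀ j ∈ Finset.Icc 1 n,
      (if Odd j then (if k * j ≤ n then NO r s (n - k * j) else 0) else 0)
        = (if Odd j ∧ k * j ≤ n then NO r s (n - k * j) else 0) := by
    intro j _
    split_ifs with h1 h2 h3 h3 <;> first | rfl | tauto
  rw [Finset.sum_congr rfl hcollapse, ← Finset.sum_filter, gg]
  apply Finset.sum_nbij' (i := fun j => j / 2) (j := fun t => 2 * t + 1)
  · intro j hj
    simp only [Finset.mem_filter, Finset.mem_Icc, Nat.odd_iff] at hj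
    have := (hdiv j).mp hj.2.2
    simp only [Finset.mem_range]
    omega
  · intro t ht
    simp only [Finset.mem_range] at ht
    simp only [Finset.mem_filter, Finset.mem_Icc, Nat.odd_iff]
    have h1 : 2 * t + 1 ≤ n / k := by omega
    have h2 := (hdiv (2 * t + 1)).mpr h1
    refine ⟨⟨by omega, by omega⟩, by omega, h2⟩
  · intro j hj
    simp only [Finset.mem_filter, Finset.mem_Icc, Nat.odd_iff] at hj
    omega
  · intro t _
    omega
  · intro j hj
    simp only [Finset.mem_filter, Finset.mem_Icc, Nat.odd_iff] at hj
    have h2 : 2 * (j / 2) + 1 = j := by omega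
    rw [h2, mul_comm]

lemma all_sum_eq_hhh (r s k n : ℕ) (hk : 0 < k) :
    ∑ i ∈ Finset.Icc 1 n, (if i * k ≤ n then NO r s (n - i * k) else 0)
      = hhh r s k n := by
  classical
  have hdiv : ∀ x : ℕ, x * k ≤ n ↔ x ≤ n / k := by
    intro x
    rw [← Nat.le_div_iff_mul_le hk]
  have hMn : n / k ≤ n := Nat.div_le_self n k
  rw [← Finset.sum_filter, hhh]
  apply Finset.sum_nbij' (i := fun i => i - 1) (j := fun t => t + 1)
  · intro i hi
    simp only [Finset.mem_filter, Finset.mem_Icc] at hi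
    have := (hdiv i).mp hi.2
    simp only [Finset.mem_range]
    omega
  · intro t ht
    simp only [Finset.mem_range] at ht
    simp only [Finset.mem_filter, Finset.mem_Icc]
    have h1 : t + 1 ≤ n / k := by omega
    exact ⟨⟨by omega, by omega⟩, (hdiv (t + 1)).mpr h1⟩
  · intro i hi
    simp only [Finset.mem_filter, Finset.mem_Icc] at hi
    omega
  · intro t _
    omega
  · intro i hi
    simp only [Finset.mem_filter, Finset.mem_Icc] at hi
    have h2 : i - 1 + 1 = i := by omega
    rw [h2]



lemma overGOdd_eq (r s k n : ℕ) :
    overGOdd r s k n = ∑ P ∈ FO r s n,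
      (P.2.toFinset.filter fun p => k ≤ P.2.count p).card := by
  rw [overGOdd]
  exact finsum_mem_eq_finite_toFinset_sum _ (finite_SO r s n)

lemma overFOdd_eq (r s k n : ℕ) :
    overFOdd r s k n = ∑ P ∈ FO r s n,
      (Multiset.filter (fun p => p.1 = k) P.2).card := by
  rw [overFOdd]
  exact finsum_mem_eq_finite_toFinset_sum _ (finite_SO r s n)

lemma overFDist_eq (r s k n : ℕ) :
    overFDist r s k n = ∑ P ∈ FD r s n,
      (Multiset.filter (fun p => p.1 = k) P.2).card := by
  rw [overFDist]
  exact finsum_mem_eq_finite_toFinset_sum _ (finite_SD r s n)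

lemma overGOdd_val (r s k n : ℕ) (hk : 0 < k) :
    overGOdd r s k n = s * gg r s k n := by
  classical
  rw [overGOdd_eq]
  set U : Finset (ℕ × ℕ) := Finset.Icc 1 n ×ˢ Finset.Icc 1 s with hU
  have step2 : ∀ P ∈ FO r s n,
      (P.2.toFinset.filter fun p => k ≤ P.2.count p).card
        = ∑ q ∈ U, (if k ≤ P.2.count q then 1 else 0) := by
    intro P hP
    rw [mem_FO] at hP
    have hfeq : (P.2.toFinset.filter fun p => k ≤ P.2.count p)
        = U.filter (fun q => k ≤ P.2.count q) := by
      ext q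
      simp only [Finset.mem_filter, Multiset.mem_toFinset, hU, Finset.mem_product,
        Finset.mem_Icc]
      constructor
      · rintro ⟨hqm, hcnt⟩
        obtain ⟨ho, hc1, hc2⟩ := hP.2.1 q hqm
        exact ⟨⟨⟨ho.pos, fstO_le hP hqm⟩, hc1, hc2⟩, hcnt⟩
      · rintro ⟨_, hcnt⟩
        exact ⟨Multiset.count_pos.mp (by omega), hcnt⟩
    rw [hfeq, Finset.card_filter]
  rw [Finset.sum_congr rfl step2, Finset.sum_comm]
  have step4 : ∀ q ∈ U, (∑ P ∈ FO r s n, if k ≤ P.2.count q then 1 else 0)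
      = (if Odd q.1 then (if k * q.1 ≤ n then NO r s (n - k * q.1) else 0) else 0) := by
    intro q hq
    rw [hU, Finset.mem_product, Finset.mem_Icc, Finset.mem_Icc] at hq
    rw [← Finset.card_filter]
    by_cases ho : Odd q.1
    · rw [if_pos ho]
      have := remove_odd r s n q.1 q.2 k ho hq.2.1 hq.2.2 hk
      rw [← this]
    · rw [if_neg ho]
      rw [Finset.card_eq_zero, Finset.filter_eq_empty_iff]
      intro P hP
      rw [mem_FO] at hP
      intro hcnt
      have hqm : q ∈ P.2 := Multiset.count_pos.mp (by omega)
      exact ho (hP.2.1 q hqm).1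
  rw [Finset.sum_congr rfl step4, hU, Finset.sum_product]
  have step5 : ∀ j ∈ Finset.Icc 1 n,
      (∑ _c ∈ Finset.Icc 1 s, (if Odd j then (if k * j ≤ n then NO r s (n - k * j) else 0) else 0))
      = s * (if Odd j then (if k * j ≤ n then NO r s (n - k * j) else 0) else 0) := by
    intro j _
    rw [Finset.sum_const, Nat.card_Icc, smul_eq_mul]
    norm_num
  rw [Finset.sum_congr rfl step5, ← Finset.mul_sum, odd_sum_eq_gg r s k n hk]

lemma overFOdd_val (r s k n : ℕ) (hk : 0 < k) (hkodd : Odd k) :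
    overFOdd r s k n = s * hhh r s k n := by
  classical
  rw [overFOdd_eq]
  have step1 : ∀ P ∈ FO r s n,
      (Multiset.filter (fun p => p.1 = k) P.2).card
        = ∑ c ∈ Finset.Icc 1 s, P.2.count (k, c) := by
    intro P hP
    rw [mem_FO] at hP
    exact card_filter_eq_sum_count (fun p hp => (hP.2.1 p hp).2)
  rw [Finset.sum_congr rfl step1, Finset.sum_comm]
  have step2 : ∀ c ∈ Finset.Icc 1 s,
      (∑ P ∈ FO r s n, P.2.count (k, c)) = hhh r s k n := by
    intro c hc
    rw [Finset.mem_Icc] at hc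
    have h1 : ∀ P ∈ FO r s n, P.2.count (k, c)
        = ∑ i ∈ Finset.Icc 1 n, (if i ≤ P.2.count (k, c) then 1 else 0) := by
      intro P hP
      rw [mem_FO] at hP
      rw [sum_ite_le (countO_le hP (k, c))]
    rw [Finset.sum_congr rfl h1, Finset.sum_comm]
    have h2 : ∀ i ∈ Finset.Icc 1 n,
        (∑ P ∈ FO r s n, if i ≤ P.2.count (k, c) then 1 else 0)
          = (if i * k ≤ n then NO r s (n - i * k) else 0) := by
      intro i hi
      rw [Finset.mem_Icc] at hi
      rw [← Finset.card_filter]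
      exact remove_odd r s n k c i hkodd hc.1 hc.2 hi.1
    rw [Finset.sum_congr rfl h2, all_sum_eq_hhh r s k n hk]
  rw [Finset.sum_congr rfl step2, Finset.sum_const, Nat.card_Icc, smul_eq_mul]
  norm_num

noncomputable def BC (r s k c m : ℕ) : ℕ :=
  ((FD r s m).filter (fun P => (k, c) ∈ P.2)).card

lemma overFDist_val (r s k n : ℕ) :
    overFDist r s k n = ∑ c ∈ Finset.Icc 1 s, BC r s k c n := by
  classical
  rw [overFDist_eq]
  have step1 : ∀ P ∈ FD r s n,
      (Multiset.filter (fun p => p.1 = k) P.2).card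
        = ∑ c ∈ Finset.Icc 1 s, P.2.count (k, c) := by
    intro P hP
    rw [mem_FD] at hP
    exact card_filter_eq_sum_count (fun p hp => (hP.2.1 p hp).2)
  rw [Finset.sum_congr rfl step1, Finset.sum_comm]
  apply Finset.sum_congr rfl
  intro c _
  rw [BC, Finset.card_filter]
  apply Finset.sum_congr rfl
  intro P hP
  rw [mem_FD] at hP
  rw [Multiset.count_eq_of_nodup hP.2.2.1]

lemma gg_zero (r s k : ℕ) : gg r s k 0 = 0 := by
  simp [gg]

lemma Rh (r s k m : ℕ) (hk : 0 < k) :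
    hhh r s k m = (if k ≤ m then NO r s (m - k) else 0) + hhh r s k (m - k) := by
  by_cases hkm : k ≤ m
  · have hdiv : (m - k) / k = m / k - 1 := by
      have h := Nat.sub_mul_div_of_le m k 1 (by omega)
      simpa using h
    have hM : 1 ≤ m / k := (Nat.one_le_div_iff hk).mpr hkm
    have h1 : m / k = ((m - k) / k) + 1 := by omega
    simp only [hhh]
    rw [h1, Finset.sum_range_succ', add_comm, if_pos hkm]
    congr 1
    · norm_num
    · apply Finset.sum_congr rfl
      intro t _
      congr 1
      rw [Nat.sub_sub]
      congr 1
      ring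
  · rw [if_neg hkm]
    have h0 : m / k = 0 := Nat.div_eq_of_lt (by omega)
    have h0' : m - k = 0 := by omega
    simp [hhh, h0, h0']

lemma Rg (r s k m : ℕ) (hk : 0 < k) :
    gg r s k m = (if k ≤ m then NO r s (m - k) else 0) + gg r s k (m - 2 * k) := by
  rcases Nat.lt_or_ge m k with h1 | h1
  · have h0 : m / k = 0 := Nat.div_eq_of_lt h1
    have h2 : m - 2 * k = 0 := by omega
    rw [if_neg (by omega), h2, gg_zero]
    simp [gg, h0]
  · rcases Nat.lt_or_ge m (2 * k) with h2 | h2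
    · have hM : m / k = 1 := by
        have a1 : 1 ≤ m / k := (Nat.one_le_div_iff hk).mpr h1
        have a2 : m / k < 2 := Nat.div_lt_of_lt_mul (by omega)
        omega
      have h3 : m - 2 * k = 0 := by omega
      rw [if_pos h1, h3, gg_zero]
      simp only [gg, hM]
      norm_num
    · have hd2 : (m - 2 * k) / k = m / k - 2 := by
        have h := Nat.sub_mul_div_of_le m k 2 (by omega)
        rwa [mul_comm k 2] at h
      have hM : 2 ≤ m / k := (Nat.le_div_iff_mul_le hk).mpr (by omega)
      have h3 : (m / k + 1) / 2 = (((m - 2 * k) / k + 1) / 2) + 1 := by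
        rw [hd2]
        omega
      simp only [gg]
      rw [h3, Finset.sum_range_succ', add_comm, if_pos h1]
      congr 1
      · norm_num
      · apply Finset.sum_congr rfl
        intro t _
        congr 1
        rw [Nat.sub_sub]
        congr 1
        ring

lemma BC_claim (r s k c : ℕ) (hk : 0 < k) (hc1 : 1 ≤ c) (hc2 : c ≤ s) :
    ∀ m, BC r s k c m + gg r s k (m - k) = gg r s k m := by
  intro m
  induction m using Nat.strong_induction_on with
  | _ m ih =>
    by_cases hkm : k ≤ m
    · have hrec : BC r s k c m + BC r s k c (m - k) = NO r s (m - k) := by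
        have h1 := remove_dist r s k c m hc1 hc2 hk hkm
        have h2 := Finset.card_filter_add_card_filter_not
          (s := FD r s (m - k)) (p := fun P => (k, c) ∈ P.2)
        have h3 := euler r s (m - k)
        rw [BC, BC, h1]
        rw [ND] at h3
        omega
      have hih := ih (m - k) (by omega)
      have hsub : m - k - k = m - 2 * k := by omega
      rw [hsub] at hih
      have hRg := Rg r s k m hk
      rw [if_pos hkm] at hRg
      omega
    · have h0 : BC r s k c m = 0 := remove_dist_zero r s k c m hk (by omega)
      have h1 : m - k = 0 := by omega
      have hggm : gg r s k m = 0 := by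
        simp [gg, Nat.div_eq_of_lt (show m < k by omega)]
      rw [h0, h1, gg_zero, hggm]

lemma H_claim (r s k : ℕ) (hk : 0 < k) :
    ∀ m, hhh r s k m = gg r s k m + gg r s k (m - k) := by
  intro m
  induction m using Nat.strong_induction_on with
  | _ m ih =>
    by_cases hkm : k ≤ m
    · have hRh := Rh r s k m hk
      rw [if_pos hkm] at hRh
      have hih := ih (m - k) (by omega)
      have hsub : m - k - k = m - 2 * k := by omega
      rw [hsub] at hih
      have hRg := Rg r s k m hk
      rw [if_pos hkm] at hRg
      omega
    · have h0 : m / k = 0 := Nat.div_eq_of_lt (by omega)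
      have h1 : m - k = 0 := by omega
      have hggm : gg r s k m = 0 := by simp [gg, h0]
      have hhm : hhh r s k m = 0 := by simp [hhh, h0]
      rw [hhm, hggm, h1, gg_zero]


end OverAux

/-- `F^d_k(n) = G°_k(n) - G°_k(n-k)`, and for odd `k`, `F°_k(n) = G°_k(n) + G°_k(n-k)`. -/
theorem overFDist_overFOdd_eq (r s : ℕ) (hr : 0 < r) (hs : 0 < s) (n k : ℕ)
    (hn : 0 < n) (hk : 0 < k) :
    ((overFDist r s k n : ℤ) = (overGOdd r s k n : ℤ) - (overGOdd r s k (n - k) : ℤ)) ∧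
    (Odd k → overFOdd r s k n = overGOdd r s k n + overGOdd r s k (n - k)) := by
  classical
  open OverAux in
  constructor
  · have hG1 := OverAux.overGOdd_val r s k n hk
    have hG2 := OverAux.overGOdd_val r s k (n - k) hk
    have hFd := OverAux.overFDist_val r s k n
    have hsum : ∀ c ∈ Finset.Icc 1 s,
        OverAux.BC r s k c n + OverAux.gg r s k (n - k) = OverAux.gg r s k n := by
      intro c hc
      rw [Finset.mem_Icc] at hc
      exact OverAux.BC_claim r s k c hk hc.1 hc.2 n
    have hkey : (∑ c ∈ Finset.Icc 1 s, OverAux.BC r s k c n)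
        + s * OverAux.gg r s k (n - k) = s * OverAux.gg r s k n := by
      have h1 := Finset.sum_congr rfl hsum
      rw [Finset.sum_add_distrib, Finset.sum_const, Finset.sum_const, Nat.card_Icc,
        smul_eq_mul, smul_eq_mul] at h1
      have hcard : s + 1 - 1 = s := by omega
      rw [hcard] at h1
      exact h1
    rw [hFd, hG1, hG2]
    omega
  · intro hkodd
    rw [OverAux.overFOdd_val r s k n hk hkodd, OverAux.overGOdd_val r s k n hk,
      OverAux.overGOdd_val r s k (n - k) hk, OverAux.H_claim r s k hk n, Nat.mul_add]
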